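/- Let S ⊂ (0,1] be a strictly decreasing sequence converging to 0 whose box dimension dim_B S exists, let 0 < r ≤ 1, and let H_{r,S} = {(x,y) ∈ (0,1] × (0,1] : x^r y = c for some c ∈ S}. Then both the lower box dimension and the upper box dimension of H_{r,S} are at least 1 + dim_B S. -/

import Mathlib

open Filter MeasureTheory Metric Set Real
open scoped ENNReal NNReal

/-- Lower box dimension of `U ⊆ X`, with ambient dimension `N`, defined through the
Lebesgue measure of `ε`-neighborhoods:
`inf {d ≥ 0 : liminf_{ε→0⁺} |U_ε| / ε^{N−d} = 0}`. -/
noncomputable def lowerBoxDim {X : Type*} [PseudoEMetricSpace X] [MeasureSpace X]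
    (N : ℝ) (U : Set X) : ℝ :=
  sInf {d : ℝ | 0 ≤ d ∧
    Filter.liminf
      (fun ε : ℝ => volume (Metric.thickening ε U) / ENNReal.ofReal (ε ^ (N - d)))
      (nhdsWithin 0 (Set.Ioi 0)) = 0}

/-- Upper box dimension, defined with `limsup` instead of `liminf`. -/
noncomputable def upperBoxDim {X : Type*} [PseudoEMetricSpace X] [MeasureSpace X]
    (N : ℝ) (U : Set X) : ℝ :=
  sInf {d : ℝ | 0 ≤ d ∧
    Filter.limsup
      (fun ε : ℝ => volume (Metric.thickening ε U) / ENNReal.ofReal (ε ^ (N - d)))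
      (nhdsWithin 0 (Set.Ioi 0)) = 0}

section AuxHyperbola

/-- liminf of a constant (finite) multiple in `ℝ≥0∞`. -/
private lemma aux_liminf_const_mul {α : Type*} {f : Filter α} [f.NeBot] {u : α → ℝ≥0∞}
    {a : ℝ≥0∞} (ha_top : a ≠ ⊤) :
    (f.liminf fun x : α => a * u x) = a * f.liminf u := by
  by_cases ha_zero : a = 0
  · simp only [ha_zero, zero_mul]
    exact Filter.liminf_const 0
  let g := fun x : ℝ≥0∞ => a * x
  have hg_bij : Function.Bijective g :=
    Function.bijective_iff_has_inverse.mpr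
      ⟨fun x => a⁻¹ * x,
        ⟨fun x => by simp [g, ← mul_assoc, ENNReal.inv_mul_cancel ha_zero ha_top], fun x => by
          simp [g, ← mul_assoc, ENNReal.mul_inv_cancel ha_zero ha_top]⟩⟩
  have hg_mono : StrictMono g :=
    Monotone.strictMono_of_injective (fun _ _ _ => by rwa [ENNReal.mul_le_mul_iff_right ha_zero ha_top])
      hg_bij.1
  let g_iso := StrictMono.orderIsoOfSurjective g hg_mono hg_bij.2
  exact (OrderIso.liminf_apply g_iso).symm

/-- the map `ε ↦ ε/2` preserves the filter `𝓝[>] 0` on `ℝ`. -/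
private lemma aux_map_half :
    Filter.map (fun ε : ℝ => ε / 2) (nhdsWithin 0 (Set.Ioi 0)) = nhdsWithin 0 (Set.Ioi 0) := by
  have h2 : (2⁻¹ : ℝ) ≠ 0 := by norm_num
  have hfun : (fun ε : ℝ => ε / 2) = (Homeomorph.mulRight₀ (2⁻¹ : ℝ) h2) := by
    funext x
    simp [Homeomorph.coe_mulRight₀, div_eq_mul_inv]
  have himg : (fun ε : ℝ => ε * 2⁻¹) '' (Set.Ioi 0) = Set.Ioi (0:ℝ) := by
    ext y
    constructor
    · rintro ⟨x, hx, rfl⟩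
      exact mul_pos (Set.mem_Ioi.mp hx) (by norm_num)
    · intro hy
      exact ⟨2 * y, by simp only [Set.mem_Ioi] at hy ⊢; linarith, by ring⟩
  have := (Homeomorph.mulRight₀ (2⁻¹ : ℝ) h2).isEmbedding.map_nhdsWithin_eq (Set.Ioi 0) 0
  rw [hfun, this]
  have h0 : (Homeomorph.mulRight₀ (2⁻¹ : ℝ) h2) (0:ℝ) = 0 := by
    simp [Homeomorph.coe_mulRight₀]
  have himg' : (Homeomorph.mulRight₀ (2⁻¹ : ℝ) h2) '' (Set.Ioi 0) = Set.Ioi (0:ℝ) := by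
    rw [Homeomorph.coe_mulRight₀]
    convert himg using 2
  rw [h0, himg']

/-- The hyperbola family is contained in a bounded set. -/
private lemma aux_H_bounded (r : ℝ) (s : ℕ → ℝ) :
    Bornology.IsBounded {p : ℝ × ℝ | p.1 ∈ Set.Ioc (0:ℝ) 1 ∧
        p.2 ∈ Set.Ioc (0:ℝ) 1 ∧ p.1 ^ r * p.2 ∈ Set.range s} := by
  refine ((isBounded_Icc (0:ℝ) 1).prod (isBounded_Icc (0:ℝ) 1)).subset ?_
  rintro ⟨x, y⟩ ⟨hx, hy, -⟩
  exact ⟨⟨hx.1.le, hx.2⟩, ⟨hy.1.le, hy.2⟩⟩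

/-- The closure of the hyperbola family is a Lebesgue-null subset of the plane. -/
private lemma aux_closure_null (r : ℝ) (hr0 : 0 < r) (s : ℕ → ℝ)
    (hlim : Tendsto s atTop (nhds 0)) :
    volume (closure {p : ℝ × ℝ | p.1 ∈ Set.Ioc (0:ℝ) 1 ∧
        p.2 ∈ Set.Ioc (0:ℝ) 1 ∧ p.1 ^ r * p.2 ∈ Set.range s}) = 0 := by
  set Z : Set ℝ := insert 0 (Set.range s) with hZ
  have hZclosed : IsClosed Z := hlim.isCompact_insert_range.isClosed
  have hfcont : Continuous (fun p : ℝ × ℝ => p.1 ^ r * p.2) :=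
    ((Real.continuous_rpow_const hr0.le).comp continuous_fst).mul continuous_snd
  set K : Set (ℝ × ℝ) :=
    (Set.Icc (0:ℝ) 1 ×ˢ Set.Icc (0:ℝ) 1) ∩ (fun p : ℝ × ℝ => p.1 ^ r * p.2) ⁻¹' Z with hK
  have hKclosed : IsClosed K :=
    ((isClosed_Icc.prod isClosed_Icc).inter (hZclosed.preimage hfcont))
  have hsub : {p : ℝ × ℝ | p.1 ∈ Set.Ioc (0:ℝ) 1 ∧
      p.2 ∈ Set.Ioc (0:ℝ) 1 ∧ p.1 ^ r * p.2 ∈ Set.range s} ⊆ K := by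
    rintro ⟨x, y⟩ ⟨hx, hy, hs⟩
    exact ⟨⟨⟨hx.1.le, hx.2⟩, ⟨hy.1.le, hy.2⟩⟩, Set.mem_insert_of_mem _ hs⟩
  have hclosure : closure {p : ℝ × ℝ | p.1 ∈ Set.Ioc (0:ℝ) 1 ∧
      p.2 ∈ Set.Ioc (0:ℝ) 1 ∧ p.1 ^ r * p.2 ∈ Set.range s} ⊆ K :=
    closure_minimal hsub hKclosed
  refine measure_mono_null hclosure ?_
  -- split K into the segment {0} × ℝ and the part with positive first coordinate
  have hKsub : K ⊆ (({0} : Set ℝ) ×ˢ (Set.univ : Set ℝ)) ∪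
      ((Set.Ioc (0:ℝ) 1 ×ˢ (Set.univ : Set ℝ)) ∩ (fun p : ℝ × ℝ => p.1 ^ r * p.2) ⁻¹' Z) := by
    rintro ⟨x, y⟩ ⟨⟨hx, -⟩, hfz⟩
    rcases eq_or_lt_of_le hx.1 with h0 | h0
    · exact Or.inl ⟨h0.symm, Set.mem_univ _⟩
    · exact Or.inr ⟨⟨⟨h0, hx.2⟩, Set.mem_univ _⟩, hfz⟩
  refine measure_mono_null hKsub ?_
  refine measure_union_null ?_ ?_
  · rw [MeasureTheory.Measure.volume_eq_prod, MeasureTheory.Measure.prod_prod]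
    simp
  · have hZc : Z.Countable := (Set.countable_range s).insert 0
    have hZm : MeasurableSet Z := hZc.measurableSet
    have hmeas : MeasurableSet ((Set.Ioc (0:ℝ) 1 ×ˢ (Set.univ : Set ℝ)) ∩
        (fun p : ℝ × ℝ => p.1 ^ r * p.2) ⁻¹' Z) :=
      (measurableSet_Ioc.prod MeasurableSet.univ).inter (hfcont.measurable hZm)
    rw [MeasureTheory.Measure.volume_eq_prod, MeasureTheory.Measure.prod_apply hmeas]
    have hslice : ∀ x : ℝ,
        volume (Prod.mk x ⁻¹' ((Set.Ioc (0:ℝ) 1 ×ˢ (Set.univ : Set ℝ)) ∩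
          (fun p : ℝ × ℝ => p.1 ^ r * p.2) ⁻¹' Z)) = 0 := by
      intro x
      by_cases hx : x ∈ Set.Ioc (0:ℝ) 1
      · have hxr : (0:ℝ) < x ^ r := Real.rpow_pos_of_pos hx.1 r
        have hset : Prod.mk x ⁻¹' ((Set.Ioc (0:ℝ) 1 ×ˢ (Set.univ : Set ℝ)) ∩
            (fun p : ℝ × ℝ => p.1 ^ r * p.2) ⁻¹' Z) = (fun y : ℝ => x ^ r * y) ⁻¹' Z := by
          ext y
          simp [hx]
        rw [hset]
        have : ((fun y : ℝ => x ^ r * y) ⁻¹' Z).Countable :=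
          hZc.preimage (mul_right_injective₀ hxr.ne')
        exact this.measure_zero _
      · have hset : Prod.mk x ⁻¹' ((Set.Ioc (0:ℝ) 1 ×ˢ (Set.univ : Set ℝ)) ∩
            (fun p : ℝ × ℝ => p.1 ^ r * p.2) ⁻¹' Z) = ∅ := by
          ext y
          simp [hx]
        rw [hset]
        exact measure_empty
    simp only [hslice]
    simp

/-- Key geometric-measure estimate: the `ε/2`-neighborhood of `S` has measure controlled
by the `ε`-neighborhood of the hyperbola family. -/
private lemma aux_key (r : ℝ) (hr0 : 0 < r) (hr1 : r ≤ 1) (s : ℕ → ℝ)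
    (hmem : ∀ n, s n ∈ Set.Ioc (0:ℝ) 1) (N : ℕ) (hN : ∀ n, N ≤ n → s n ≤ 1/8)
    (ε : ℝ) (hε0 : 0 < ε) (hε4 : ε ≤ 1/4) :
    volume (Metric.thickening (ε/2) (Set.range s)) ≤
      ((4 * N + 4 : ℕ) : ℝ≥0∞) * volume (Metric.thickening ε
        {p : ℝ × ℝ | p.1 ∈ Set.Ioc (0:ℝ) 1 ∧
          p.2 ∈ Set.Ioc (0:ℝ) 1 ∧ p.1 ^ r * p.2 ∈ Set.range s}) := by
  set H : Set (ℝ × ℝ) := {p : ℝ × ℝ | p.1 ∈ Set.Ioc (0:ℝ) 1 ∧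
      p.2 ∈ Set.Ioc (0:ℝ) 1 ∧ p.1 ^ r * p.2 ∈ Set.range s} with hHdef
  set T : Set ℝ := Metric.thickening (ε/2) (Set.range s) ∩ Set.Ioc 0 (1/4 : ℝ) with hTdef
  have hTmeas : MeasurableSet T :=
    Metric.isOpen_thickening.measurableSet.inter measurableSet_Ioc
  have hε2 : (0:ℝ) < ε / 2 := by linarith
  -- (1) lower bound for the measure of T
  have hTlow : ENNReal.ofReal (ε/2) ≤ volume T := by
    have hIoo : Set.Ioo (s N) (s N + ε/2) ⊆ T := by
      intro y hy
      have hsN : s N ≤ 1/8 := hN N le_rfl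
      have hsN0 : 0 < s N := (hmem N).1
      constructor
      · refine Metric.mem_thickening_iff.2 ⟨s N, Set.mem_range_self N, ?_⟩
        rw [Real.dist_eq, abs_lt]
        constructor <;> [linarith [hy.1]; linarith [hy.2]]
      · exact ⟨by linarith [hy.1], by linarith [hy.2]⟩
    calc ENNReal.ofReal (ε/2) = volume (Set.Ioo (s N) (s N + ε/2)) := by
          rw [Real.volume_Ioo]; ring_nf
      _ ≤ volume T := measure_mono hIoo
  -- (2) covering of the thickening of S
  have hcover : Metric.thickening (ε/2) (Set.range s) ⊆
      T ∪ (Set.Ioc (-(ε/2)) 0 ∪ ⋃ n ∈ Finset.range N, Metric.ball (s n) (ε/2)) := by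
    intro y hy
    obtain ⟨c, ⟨m, rfl⟩, hdist⟩ := Metric.mem_thickening_iff.1 hy
    rw [Real.dist_eq, abs_lt] at hdist
    by_cases hy1 : y ∈ Set.Ioc (0:ℝ) (1/4)
    · exact Or.inl ⟨hy, hy1⟩
    · right
      rcases not_and_or.1 hy1 with h0 | h4
      · push_neg at h0
        left
        have := (hmem m).1
        exact ⟨by linarith [hdist.1], by linarith⟩
      · push_neg at h4
        right
        have hm : m < N := by
          by_contra hm
          push_neg at hm
          have := hN m hm
          have := hdist.1
          linarith
        refine Set.mem_biUnion (Finset.mem_range.2 hm) ?_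
        rw [Metric.mem_ball, Real.dist_eq, abs_lt]
        exact hdist
  -- (3) measure of the covering
  have hvolcover : volume (Metric.thickening (ε/2) (Set.range s)) ≤
      volume T + (ENNReal.ofReal (ε/2) + (N : ℝ≥0∞) * ENNReal.ofReal ε) := by
    refine (measure_mono hcover).trans ?_
    refine (measure_union_le _ _).trans ?_
    refine add_le_add le_rfl ?_
    refine (measure_union_le _ _).trans ?_
    refine add_le_add ?_ ?_
    · rw [Real.volume_Ioc]
      exact le_of_eq (by ring_nf)
    · refine (measure_biUnion_finset_le _ _).trans ?_
      have : ∀ n ∈ Finset.range N, volume (Metric.ball (s n) (ε/2)) = ENNReal.ofReal ε := by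
        intro n _
        rw [Real.volume_ball]
        ring_nf
      rw [Finset.sum_congr rfl this, Finset.sum_const, Finset.card_range, nsmul_eq_mul]
  -- (4) the comparison set A
  set A : Set (ℝ × ℝ) := (Set.Ioc (1/2 : ℝ) 1 ×ˢ (Set.univ : Set ℝ)) ∩
      (fun p : ℝ × ℝ => p.1 ^ r * p.2) ⁻¹' T with hAdef
  have hfcont : Continuous (fun p : ℝ × ℝ => p.1 ^ r * p.2) :=
    ((Real.continuous_rpow_const hr0.le).comp continuous_fst).mul continuous_snd
  have hAmeas : MeasurableSet A :=
    (measurableSet_Ioc.prod MeasurableSet.univ).inter (hfcont.measurable hTmeas)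
  -- (5) A is inside the ε-thickening of H
  have hAsub : A ⊆ Metric.thickening ε H := by
    rintro ⟨x, y⟩ ⟨⟨hx, -⟩, hT⟩
    obtain ⟨hthick, hIoc⟩ := hT
    obtain ⟨c, ⟨m, rfl⟩, hdist⟩ := Metric.mem_thickening_iff.1 hthick
    rw [Real.dist_eq, abs_lt] at hdist
    have hx0 : (0:ℝ) < x := lt_trans (by norm_num) hx.1
    have hxr0 : (0:ℝ) < x ^ r := Real.rpow_pos_of_pos hx0 r
    have hxr1 : x ^ r ≤ 1 := Real.rpow_le_one hx0.le hx.2 hr0.le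
    have hxrhalf : (1/2 : ℝ) ≤ x ^ r := by
      have h1 : ((1:ℝ)/2) ^ (1:ℝ) ≤ ((1:ℝ)/2) ^ r :=
        Real.rpow_le_rpow_of_exponent_ge (by norm_num) (by norm_num) hr1
      have h2 : ((1:ℝ)/2) ^ r ≤ x ^ r :=
        Real.rpow_le_rpow (by norm_num) hx.1.le hr0.le
      rw [Real.rpow_one] at h1
      linarith
    have hsm0 : 0 < s m := (hmem m).1
    have hxy4 : x ^ r * y ≤ 1/4 := hIoc.2
    have hxy0 : 0 < x ^ r * y := hIoc.1
    have hy0 : 0 < y := by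
      by_contra hy
      push_neg at hy
      nlinarith
    have hc2 : s m ≤ 1/2 := by nlinarith [hdist.2]
    have hcxr : s m ≤ x ^ r := le_trans hc2 hxrhalf
    have hq1 : s m / x ^ r ≤ 1 := (div_le_one hxr0).2 hcxr
    have hq0 : 0 < s m / x ^ r := div_pos hsm0 hxr0
    have hHmem : (x, s m / x ^ r) ∈ H := by
      refine ⟨⟨hx0, hx.2⟩, ⟨hq0, hq1⟩, ?_⟩
      show x ^ r * (s m / x ^ r) ∈ Set.range s
      rw [mul_div_cancel₀ _ hxr0.ne']
      exact Set.mem_range_self m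
    refine Metric.mem_thickening_iff.2 ⟨(x, s m / x ^ r), hHmem, ?_⟩
    rw [Prod.dist_eq]
    have hd1 : dist x x = 0 := by simp
    have hd2 : dist y (s m / x ^ r) < ε := by
      rw [Real.dist_eq]
      have heq : y - s m / x ^ r = (x ^ r * y - s m) / x ^ r := by
        field_simp
      rw [heq, abs_div, abs_of_pos hxr0, div_lt_iff₀ hxr0]
      have habs : |x ^ r * y - s m| < ε / 2 := abs_lt.2 hdist
      nlinarith [abs_nonneg (x ^ r * y - s m)]
    rw [hd1]
    exact max_lt (by linarith) hd2
  -- (6) lower bound for the measure of A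
  have hAlow : ENNReal.ofReal (1/2) * volume T ≤ volume A := by
    have hAply : volume A = ∫⁻ x : ℝ, volume (Prod.mk x ⁻¹' A) := by
      rw [MeasureTheory.Measure.volume_eq_prod, MeasureTheory.Measure.prod_apply hAmeas]
    have hpt : ∀ x : ℝ, (Set.Ioc (1/2 : ℝ) 1).indicator (fun _ => volume T) x ≤
        volume (Prod.mk x ⁻¹' A) := by
      intro x
      by_cases hx : x ∈ Set.Ioc (1/2 : ℝ) 1
      · rw [Set.indicator_of_mem hx]
        have hx0 : (0:ℝ) < x := lt_trans (by norm_num) hx.1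
        have hxr0 : (0:ℝ) < x ^ r := Real.rpow_pos_of_pos hx0 r
        have hset : Prod.mk x ⁻¹' A = (fun y : ℝ => x ^ r * y) ⁻¹' T := by
          ext y
          constructor
          · rintro ⟨-, h⟩
            exact h
          · intro h
            exact ⟨⟨hx, Set.mem_univ _⟩, h⟩
        rw [hset, Real.volume_preimage_mul_left hxr0.ne']
        have hxr1 : x ^ r ≤ 1 := Real.rpow_le_one hx0.le hx.2 hr0.le
        have h1 : (1:ℝ) ≤ |(x ^ r)⁻¹| := by
          rw [abs_of_pos (inv_pos.2 hxr0)]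
          exact (one_le_inv₀ hxr0).2 hxr1
        calc volume T = 1 * volume T := (one_mul _).symm
          _ ≤ ENNReal.ofReal |(x ^ r)⁻¹| * volume T := by
              refine mul_le_mul_left ?_ _
              rw [← ENNReal.ofReal_one]
              exact ENNReal.ofReal_le_ofReal h1
      · rw [Set.indicator_of_notMem hx]
        exact zero_le
    calc ENNReal.ofReal (1/2) * volume T
        = volume T * volume (Set.Ioc (1/2 : ℝ) 1) := by
          rw [Real.volume_Ioc, mul_comm]
          norm_num
      _ = ∫⁻ x : ℝ in Set.Ioc (1/2 : ℝ) 1, volume T := by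
          rw [MeasureTheory.setLIntegral_const]
      _ = ∫⁻ x : ℝ, (Set.Ioc (1/2 : ℝ) 1).indicator (fun _ => volume T) x := by
          rw [MeasureTheory.lintegral_indicator measurableSet_Ioc]
      _ ≤ ∫⁻ x : ℝ, volume (Prod.mk x ⁻¹' A) := MeasureTheory.lintegral_mono hpt
      _ = volume A := hAply.symm
  -- (7) putting everything together
  have hT2A : volume T ≤ 2 * volume A := by
    have := mul_le_mul_right hAlow 2
    have h2 : (2 : ℝ≥0∞) * ENNReal.ofReal (1/2) = 1 := by
      rw [show ((1:ℝ)/2) = (2:ℝ)⁻¹ by norm_num, ENNReal.ofReal_inv_of_pos (by norm_num),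
        ENNReal.ofReal_ofNat]
      exact ENNReal.mul_inv_cancel (by norm_num) (by norm_num)
    rwa [← mul_assoc, h2, one_mul] at this
  have hAH : volume A ≤ volume (Metric.thickening ε H) := measure_mono hAsub
  have hεT : ENNReal.ofReal ε ≤ 2 * volume T := by
    have : ENNReal.ofReal ε = 2 * ENNReal.ofReal (ε/2) := by
      rw [← ENNReal.ofReal_ofNat, ← ENNReal.ofReal_mul (by norm_num)]
      ring_nf
    rw [this]
    exact mul_le_mul_right hTlow 2
  calc volume (Metric.thickening (ε/2) (Set.range s))
      ≤ volume T + (ENNReal.ofReal (ε/2) + (N : ℝ≥0∞) * ENNReal.ofReal ε) := hvolcover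
    _ ≤ volume T + (volume T + (N : ℝ≥0∞) * (2 * volume T)) := by
        exact add_le_add le_rfl (add_le_add hTlow (mul_le_mul_right hεT _))
    _ = ((2 * N + 2 : ℕ) : ℝ≥0∞) * volume T := by
        push_cast
        ring
    _ ≤ ((2 * N + 2 : ℕ) : ℝ≥0∞) * (2 * volume A) := mul_le_mul_right hT2A _
    _ = ((4 * N + 4 : ℕ) : ℝ≥0∞) * volume A := by
        push_cast
        ring
    _ ≤ ((4 * N + 4 : ℕ) : ℝ≥0∞) * volume (Metric.thickening ε H) :=
        mul_le_mul_right hAH _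

/-- Main abstract step, for a functional `L` which can be either `liminf` or `limsup`. -/
private lemma aux_dim_step (r : ℝ) (hr0 : 0 < r) (hr1 : r ≤ 1) (s : ℕ → ℝ)
    (hmem : ∀ n, s n ∈ Set.Ioc (0:ℝ) 1)
    (C : ℝ≥0∞) (hC : C ≠ ⊤)
    (key : ∀ ε : ℝ, 0 < ε → ε ≤ 1/4 →
      volume (Metric.thickening (ε/2) (Set.range s)) ≤
        C * volume (Metric.thickening ε
          {p : ℝ × ℝ | p.1 ∈ Set.Ioc (0:ℝ) 1 ∧
            p.2 ∈ Set.Ioc (0:ℝ) 1 ∧ p.1 ^ r * p.2 ∈ Set.range s}))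
    (L : (ℝ → ℝ≥0∞) → ℝ≥0∞)
    (hmono : ∀ u v : ℝ → ℝ≥0∞,
      (∀ᶠ ε in nhdsWithin (0:ℝ) (Set.Ioi 0), u ε ≤ v ε) → L u ≤ L v)
    (hcmul : ∀ (c : ℝ≥0∞) (u : ℝ → ℝ≥0∞), c ≠ ⊤ → L (fun ε => c * u ε) = c * L u)
    (hhalf : ∀ u : ℝ → ℝ≥0∞, L (fun ε => u (ε/2)) = L u)
    (hge : ∀ (c : ℝ≥0∞) (u : ℝ → ℝ≥0∞),
      (∀ᶠ ε in nhdsWithin (0:ℝ) (Set.Ioi 0), c ≤ u ε) → c ≤ L u)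
    (d : ℝ)
    (hLH : L (fun ε : ℝ => volume (Metric.thickening ε
        {p : ℝ × ℝ | p.1 ∈ Set.Ioc (0:ℝ) 1 ∧
          p.2 ∈ Set.Ioc (0:ℝ) 1 ∧ p.1 ^ r * p.2 ∈ Set.range s}) /
        ENNReal.ofReal (ε ^ ((2:ℝ) - d))) = 0) :
    0 ≤ d - 1 ∧ L (fun ε : ℝ => volume (Metric.thickening ε (Set.range s)) /
        ENNReal.ofReal (ε ^ ((1:ℝ) - (d - 1)))) = 0 := by
  have hexp : (1:ℝ) - (d - 1) = 2 - d := by ring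
  set S := Set.range s with hS
  set H : Set (ℝ × ℝ) := {p : ℝ × ℝ | p.1 ∈ Set.Ioc (0:ℝ) 1 ∧
      p.2 ∈ Set.Ioc (0:ℝ) 1 ∧ p.1 ^ r * p.2 ∈ Set.range s} with hH
  set G : ℝ → ℝ≥0∞ := fun δ => volume (Metric.thickening δ S) /
      ENNReal.ofReal (δ ^ ((2:ℝ) - d)) with hG
  set B : ℝ≥0∞ := ENNReal.ofReal ((2:ℝ) ^ ((2:ℝ) - d)) with hB
  have hB0 : B ≠ 0 := by
    rw [hB]
    simp only [ne_eq, ENNReal.ofReal_eq_zero, not_le]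
    exact Real.rpow_pos_of_pos (by norm_num) _
  have hBtop : B ≠ ⊤ := ENNReal.ofReal_ne_top
  -- main estimate : L G = 0
  have hGzero : L G = 0 := by
    rw [← hhalf G]
    refine le_antisymm ?_ zero_le
    have hev : ∀ᶠ ε in nhdsWithin (0:ℝ) (Set.Ioi 0),
        G (ε/2) ≤ (B * C) * (volume (Metric.thickening ε H) /
          ENNReal.ofReal (ε ^ ((2:ℝ) - d))) := by
      filter_upwards [Ioc_mem_nhdsGT_of_mem (by norm_num : (0:ℝ) ∈ Set.Ico (0:ℝ) (1/4))]
        with ε hε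
      obtain ⟨hε0, hε4⟩ := hε
      have hA0 : (0:ℝ) < ε ^ ((2:ℝ) - d) := Real.rpow_pos_of_pos hε0 _
      have hAne : ENNReal.ofReal (ε ^ ((2:ℝ) - d)) ≠ 0 := by
        simp only [ne_eq, ENNReal.ofReal_eq_zero, not_le]; exact hA0
      have hAtop : ENNReal.ofReal (ε ^ ((2:ℝ) - d)) ≠ ⊤ := ENNReal.ofReal_ne_top
      have hrw : ENNReal.ofReal ((ε/2) ^ ((2:ℝ) - d)) =
          ENNReal.ofReal (ε ^ ((2:ℝ) - d)) / B := by
        rw [Real.div_rpow hε0.le (by norm_num : (0:ℝ) ≤ 2),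
          ENNReal.ofReal_div_of_pos (Real.rpow_pos_of_pos (by norm_num) _)]
      have hGval : G (ε/2) = B * (volume (Metric.thickening (ε/2) S) /
          ENNReal.ofReal (ε ^ ((2:ℝ) - d))) := by
        rw [hG]
        simp only
        rw [hrw, div_eq_mul_inv, ENNReal.inv_div (Or.inl hBtop) (Or.inl hB0),
          div_eq_mul_inv, div_eq_mul_inv, ← mul_assoc, mul_comm _ B, mul_assoc,
          ← div_eq_mul_inv]
      rw [hGval]
      have hstep : volume (Metric.thickening (ε/2) S) /
          ENNReal.ofReal (ε ^ ((2:ℝ) - d)) ≤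
          C * (volume (Metric.thickening ε H) / ENNReal.ofReal (ε ^ ((2:ℝ) - d))) := by
        rw [← mul_div_assoc]
        exact ENNReal.div_le_div_right (key ε hε0 hε4) _
      calc B * (volume (Metric.thickening (ε/2) S) / ENNReal.ofReal (ε ^ ((2:ℝ) - d)))
          ≤ B * (C * (volume (Metric.thickening ε H) /
              ENNReal.ofReal (ε ^ ((2:ℝ) - d)))) := mul_le_mul_right hstep _
        _ = (B * C) * (volume (Metric.thickening ε H) /
              ENNReal.ofReal (ε ^ ((2:ℝ) - d))) := by rw [mul_assoc]
    calc L (fun ε => G (ε/2))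
        ≤ L (fun ε => (B * C) * (volume (Metric.thickening ε H) /
            ENNReal.ofReal (ε ^ ((2:ℝ) - d)))) := hmono _ _ hev
      _ = (B * C) * L (fun ε : ℝ => volume (Metric.thickening ε H) /
            ENNReal.ofReal (ε ^ ((2:ℝ) - d))) :=
          hcmul _ _ (ENNReal.mul_ne_top hBtop hC)
      _ = 0 := by rw [hLH, mul_zero]
  -- d must be at least 1
  have hd1 : (1:ℝ) ≤ d := by
    by_contra hd
    push_neg at hd
    have h1 : (1 : ℝ≥0∞) ≤ L G := by
      refine hge 1 G ?_
      filter_upwards [Ioc_mem_nhdsGT_of_mem (by norm_num : (0:ℝ) ∈ Set.Ico (0:ℝ) 1)]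
        with δ hδ
      obtain ⟨hδ0, hδ1⟩ := hδ
      have h2d : (1:ℝ) ≤ 2 - d := by linarith
      have hle : δ ^ ((2:ℝ) - d) ≤ 2 * δ := by
        have := Real.rpow_le_rpow_of_exponent_ge hδ0 hδ1 h2d
        rw [Real.rpow_one] at this
        linarith
      have hball : ENNReal.ofReal (2 * δ) ≤ volume (Metric.thickening δ S) := by
        rw [← Real.volume_ball (s 0) δ]
        exact measure_mono (Metric.ball_subset_thickening (Set.mem_range_self 0) δ)
      have hA0 : (0:ℝ) < δ ^ ((2:ℝ) - d) := Real.rpow_pos_of_pos hδ0 _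
      have hAne : ENNReal.ofReal (δ ^ ((2:ℝ) - d)) ≠ 0 := by
        simp only [ne_eq, ENNReal.ofReal_eq_zero, not_le]; exact hA0
      show (1 : ℝ≥0∞) ≤ volume (Metric.thickening δ S) / ENNReal.ofReal (δ ^ ((2:ℝ) - d))
      rw [ENNReal.le_div_iff_mul_le (Or.inl hAne) (Or.inl ENNReal.ofReal_ne_top), one_mul]
      exact le_trans (ENNReal.ofReal_le_ofReal hle) hball
    rw [hGzero] at h1
    exact absurd h1 (by simp)
  refine ⟨by linarith, ?_⟩
  simp only [hexp]
  exact hGzero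

end AuxHyperbola

/-- Lower bound for the box dimension of the family of hyperbolas
`H_{r,S} = {(x,y) ∈ (0,1]² : x^r y ∈ S}` with `0 < r ≤ 1`:
both the lower and upper box dimensions of `H_{r,S}` are at least `1 + dim_B S`,
for any strictly decreasing sequence `S ⊂ (0,1]` converging to `0` whose box
dimension exists. -/
theorem boxDim_hyperbola_family_lower_bound (r : ℝ) (hr0 : 0 < r) (hr1 : r ≤ 1)
    (s : ℕ → ℝ)
    (hmem : ∀ n, s n ∈ Set.Ioc (0:ℝ) 1)
    (hanti : StrictAnti s)
    (hlim : Tendsto s atTop (nhds 0))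
    (dS : ℝ)
    (hdS : lowerBoxDim 1 (Set.range s) = dS ∧ upperBoxDim 1 (Set.range s) = dS) :
    1 + dS ≤ lowerBoxDim 2 {p : ℝ × ℝ | p.1 ∈ Set.Ioc (0:ℝ) 1 ∧
        p.2 ∈ Set.Ioc (0:ℝ) 1 ∧ p.1 ^ r * p.2 ∈ Set.range s} ∧
    1 + dS ≤ upperBoxDim 2 {p : ℝ × ℝ | p.1 ∈ Set.Ioc (0:ℝ) 1 ∧
        p.2 ∈ Set.Ioc (0:ℝ) 1 ∧ p.1 ^ r * p.2 ∈ Set.range s} := by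
  set H : Set (ℝ × ℝ) := {p : ℝ × ℝ | p.1 ∈ Set.Ioc (0:ℝ) 1 ∧
      p.2 ∈ Set.Ioc (0:ℝ) 1 ∧ p.1 ^ r * p.2 ∈ Set.range s} with hH
  -- the constant in the key estimate
  obtain ⟨N, hN⟩ : ∃ N : ℕ, ∀ n, N ≤ n → s n ≤ 1/8 := by
    have h8 : ∀ᶠ n in atTop, s n ≤ 1/8 := by
      have : Set.Iic (1/8 : ℝ) ∈ nhds (0:ℝ) := Iic_mem_nhds (by norm_num)
      exact hlim.eventually (eventually_of_mem this fun x hx => hx)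
    exact eventually_atTop.1 h8
  set C : ℝ≥0∞ := ((4 * N + 4 : ℕ) : ℝ≥0∞) with hC
  have hCtop : C ≠ ⊤ := ENNReal.natCast_ne_top _
  have key : ∀ ε : ℝ, 0 < ε → ε ≤ 1/4 →
      volume (Metric.thickening (ε/2) (Set.range s)) ≤
        C * volume (Metric.thickening ε H) :=
    fun ε hε0 hε4 => aux_key r hr0 hr1 s hmem N hN ε hε0 hε4
  -- the function tends to zero for d = 2
  have htend : Tendsto (fun ε : ℝ => volume (Metric.thickening ε H))
      (nhdsWithin 0 (Set.Ioi 0)) (nhds 0) := by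
    have hfin : ∃ R, R > 0 ∧ volume (Metric.thickening R H) ≠ ⊤ := by
      refine ⟨1, one_pos, ?_⟩
      exact (Bornology.IsBounded.measure_lt_top
        ((aux_H_bounded r s).thickening)).ne
    have := tendsto_measure_thickening (μ := volume) (s := H)
      ⟨1, one_pos, ((aux_H_bounded r s).thickening.measure_lt_top).ne⟩
    rwa [aux_closure_null r hr0 s hlim] at this
  have hfun2 : (fun ε : ℝ => volume (Metric.thickening ε H) /
      ENNReal.ofReal (ε ^ ((2:ℝ) - 2))) = fun ε : ℝ => volume (Metric.thickening ε H) := by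
    funext ε
    norm_num
  -- properties of liminf as a functional
  have hmono_inf : ∀ u v : ℝ → ℝ≥0∞,
      (∀ᶠ ε in nhdsWithin (0:ℝ) (Set.Ioi 0), u ε ≤ v ε) →
      Filter.liminf u (nhdsWithin (0:ℝ) (Set.Ioi 0)) ≤
        Filter.liminf v (nhdsWithin (0:ℝ) (Set.Ioi 0)) :=
    fun u v h => Filter.liminf_le_liminf h
  have hcmul_inf : ∀ (c : ℝ≥0∞) (u : ℝ → ℝ≥0∞), c ≠ ⊤ →
      Filter.liminf (fun ε => c * u ε) (nhdsWithin (0:ℝ) (Set.Ioi 0)) =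
        c * Filter.liminf u (nhdsWithin (0:ℝ) (Set.Ioi 0)) :=
    fun c u hc => aux_liminf_const_mul hc
  have hhalf_inf : ∀ u : ℝ → ℝ≥0∞,
      Filter.liminf (fun ε => u (ε/2)) (nhdsWithin (0:ℝ) (Set.Ioi 0)) =
        Filter.liminf u (nhdsWithin (0:ℝ) (Set.Ioi 0)) := by
    intro u
    have := Filter.liminf_comp u (fun ε : ℝ => ε / 2) (nhdsWithin (0:ℝ) (Set.Ioi 0))
    rw [aux_map_half] at this
    exact this
  have hge_inf : ∀ (c : ℝ≥0∞) (u : ℝ → ℝ≥0∞),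
      (∀ᶠ ε in nhdsWithin (0:ℝ) (Set.Ioi 0), c ≤ u ε) →
      c ≤ Filter.liminf u (nhdsWithin (0:ℝ) (Set.Ioi 0)) :=
    fun c u h => Filter.le_liminf_of_le (by isBoundedDefault) h
  -- properties of limsup as a functional
  have hmono_sup : ∀ u v : ℝ → ℝ≥0∞,
      (∀ᶠ ε in nhdsWithin (0:ℝ) (Set.Ioi 0), u ε ≤ v ε) →
      Filter.limsup u (nhdsWithin (0:ℝ) (Set.Ioi 0)) ≤
        Filter.limsup v (nhdsWithin (0:ℝ) (Set.Ioi 0)) :=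
    fun u v h => Filter.limsup_le_limsup h
  have hcmul_sup : ∀ (c : ℝ≥0∞) (u : ℝ → ℝ≥0∞), c ≠ ⊤ →
      Filter.limsup (fun ε => c * u ε) (nhdsWithin (0:ℝ) (Set.Ioi 0)) =
        c * Filter.limsup u (nhdsWithin (0:ℝ) (Set.Ioi 0)) :=
    fun c u hc => ENNReal.limsup_const_mul_of_ne_top hc
  have hhalf_sup : ∀ u : ℝ → ℝ≥0∞,
      Filter.limsup (fun ε => u (ε/2)) (nhdsWithin (0:ℝ) (Set.Ioi 0)) =
        Filter.limsup u (nhdsWithin (0:ℝ) (Set.Ioi 0)) := by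
    intro u
    have := Filter.limsup_comp u (fun ε : ℝ => ε / 2) (nhdsWithin (0:ℝ) (Set.Ioi 0))
    rw [aux_map_half] at this
    exact this
  have hge_sup : ∀ (c : ℝ≥0∞) (u : ℝ → ℝ≥0∞),
      (∀ᶠ ε in nhdsWithin (0:ℝ) (Set.Ioi 0), c ≤ u ε) →
      c ≤ Filter.limsup u (nhdsWithin (0:ℝ) (Set.Ioi 0)) :=
    fun c u h => Filter.le_limsup_of_frequently_le h.frequently
  constructor
  · -- lower box dimension
    refine le_csInf ⟨2, by norm_num, ?_⟩ ?_
    · rw [hfun2]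
      exact htend.liminf_eq
    · rintro d ⟨hd0, hLd⟩
      obtain ⟨h01, hGL⟩ := aux_dim_step r hr0 hr1 s hmem C hCtop key
        (fun u => Filter.liminf u (nhdsWithin (0:ℝ) (Set.Ioi 0)))
        hmono_inf hcmul_inf hhalf_inf hge_inf d hLd
      have hle : lowerBoxDim 1 (Set.range s) ≤ d - 1 := by
        refine csInf_le ⟨0, fun e he => he.1⟩ ⟨h01, hGL⟩
      rw [hdS.1] at hle
      linarith
  · -- upper box dimension
    refine le_csInf ⟨2, by norm_num, ?_⟩ ?_
    · rw [hfun2]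
      exact htend.limsup_eq
    · rintro d ⟨hd0, hLd⟩
      obtain ⟨h01, hGL⟩ := aux_dim_step r hr0 hr1 s hmem C hCtop key
        (fun u => Filter.limsup u (nhdsWithin (0:ℝ) (Set.Ioi 0)))
        hmono_sup hcmul_sup hhalf_sup hge_sup d hLd
      have hle : upperBoxDim 1 (Set.range s) ≤ d - 1 := by
        refine csInf_le ⟨0, fun e he => he.1⟩ ⟨h01, hGL⟩
      rw [hdS.2] at hle
      linarith
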